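/- Let J = (J_1,…,J_g) ∈ M_d(ℂ)^g be linearly independent with the span of J_1,…,J_g closed under multiplication, and let Ξ ∈ M_g(ℂ)^g be the unique tuple with J_k J_j = Σ_{s=1}^g (Ξ_j)_{k,s} J_s. Fix n. (i) If Y ∈ M_n(ℂ)^g and L_J(Y) is positive definite, then I + Λ_Ξ(Y) is invertible, ‖Λ_J(q(Y))‖ < 1 where q(Y) = Y(I+Λ_Ξ(Y))^{-1}, moreover I − Λ_Ξ(q(Y)) is invertible and p(q(Y)) = Y where p(X) = X(I−Λ_Ξ(X))^{-1}. (ii) If X ∈ M_n(ℂ)^g and ‖Λ_J(X)‖ < 1, then I − Λ_Ξ(X) is invertible, L_J(p(X)) is positive definite, I + Λ_Ξ(p(X)) is invertible, and q(p(X)) = X. Consequently q is a bijection from the interior {Y : L_J(Y) ≻ 0} of D_J(n) onto the interior {X : ‖Λ_J(X)‖ < 1} of B_J(n), with inverse p. -/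

import Mathlib

open scoped Kronecker Matrix Matrix.Norms.L2Operator ComplexOrder

noncomputable section

/-- `Λ_A(X) = Σⱼ Aⱼ ⊗ Xⱼ` (Kronecker product), a `dn × dn` matrix. -/
def lamK {g d n : ℕ} (A : Fin g → Matrix (Fin d) (Fin d) ℂ)
    (X : Fin g → Matrix (Fin n) (Fin n) ℂ) :
    Matrix (Fin d × Fin n) (Fin d × Fin n) ℂ :=
  ∑ j, (A j) ⊗ₖ (X j)

/-- `L_A(X) = I + Λ_A(X) + Λ_A(X)^*`. -/
def Lpen {g d n : ℕ} (A : Fin g → Matrix (Fin d) (Fin d) ℂ)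
    (X : Fin g → Matrix (Fin n) (Fin n) ℂ) :
    Matrix (Fin d × Fin n) (Fin d × Fin n) ℂ :=
  1 + lamK A X + (lamK A X)ᴴ

/-- The `n × n` block of a `gn × gn` matrix in position `(j, i)`. -/
def blk {g n : ℕ} (M : Matrix (Fin g × Fin n) (Fin g × Fin n) ℂ) (j i : Fin g) :
    Matrix (Fin n) (Fin n) ℂ :=
  fun a b => M (j, a) (i, b)

/-- The convexotonic map `p(X) = X (I - Λ_Ξ(X))⁻¹`, given blockwise by
`p(X)ᵢ = Σⱼ Xⱼ [(I - Λ_Ξ(X))⁻¹]_{j,i}`. -/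
def pmap {g n : ℕ} (Ξ : Fin g → Matrix (Fin g) (Fin g) ℂ)
    (X : Fin g → Matrix (Fin n) (Fin n) ℂ) : Fin g → Matrix (Fin n) (Fin n) ℂ :=
  fun i => ∑ j, X j * blk ((1 - lamK Ξ X)⁻¹) j i

/-- The convexotonic map `q(X) = X (I + Λ_Ξ(X))⁻¹`, given blockwise by
`q(X)ᵢ = Σⱼ Xⱼ [(I + Λ_Ξ(X))⁻¹]_{j,i}`. -/
def qmap {g n : ℕ} (Ξ : Fin g → Matrix (Fin g) (Fin g) ℂ)
    (X : Fin g → Matrix (Fin n) (Fin n) ℂ) : Fin g → Matrix (Fin n) (Fin n) ℂ :=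
  fun i => ∑ j, X j * blk ((1 + lamK Ξ X)⁻¹) j i

/-- A tuple `Ξ` of `g × g` matrices is convexotonic if
`Ξ_k Ξ_j = Σ_s (Ξ_j)_{k,s} Ξ_s` for all `j, k`. -/
def Convexotonic {g : ℕ} (Ξ : Fin g → Matrix (Fin g) (Fin g) ℂ) : Prop :=
  ∀ j k, Ξ k * Ξ j = ∑ s, (Ξ j) k s • Ξ s

/-- `Λ_A(α) = Σⱼ αⱼ Aⱼ` for a scalar point `α ∈ ℂ^g`. -/
def lamScalar {g d : ℕ} (A : Fin g → Matrix (Fin d) (Fin d) ℂ) (α : Fin g → ℂ) :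
    Matrix (Fin d) (Fin d) ℂ :=
  ∑ j, α j • A j

/-- A hyperbasis of `ℂ^d`: `d+1` vectors, each `d` of which form a basis. -/
def Hyperbasis {d : ℕ} (u : Fin (d + 1) → (Fin d → ℂ)) : Prop :=
  ∀ i : Fin (d + 1),
    LinearIndependent ℂ (fun j : {j : Fin (d + 1) // j ≠ i} => u j) ∧
    Submodule.span ℂ (Set.range fun j : {j : Fin (d + 1) // j ≠ i} => u j) = ⊤

/-- The tuple `A ∈ M_d(ℂ)^g` is sv-generic. -/
def SvGeneric {g d : ℕ} (A : Fin g → Matrix (Fin d) (Fin d) ℂ) : Prop :=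
  (∃ (α : Fin (d + 1) → (Fin g → ℂ)) (u : Fin (d + 1) → (Fin d → ℂ)),
    (∀ j, (1 - (lamScalar A (α j))ᴴ * lamScalar A (α j)).PosSemidef ∧
      u j ≠ 0 ∧
      LinearMap.ker (Matrix.mulVecLin (1 - (lamScalar A (α j))ᴴ * lamScalar A (α j)))
        = Submodule.span ℂ {u j}) ∧
    Hyperbasis u) ∧
  (∃ (β : Fin d → (Fin g → ℂ)) (v : Fin d → (Fin d → ℂ)),
    (∀ k, (1 - lamScalar A (β k) * (lamScalar A (β k))ᴴ).PosSemidef ∧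
      v k ≠ 0 ∧
      LinearMap.ker (Matrix.mulVecLin (1 - lamScalar A (β k) * (lamScalar A (β k))ᴴ))
        = Submodule.span ℂ {v k}) ∧
    LinearIndependent ℂ v ∧ Submodule.span ℂ (Set.range v) = ⊤)

/-- Evaluation of a `k × l` matrix of noncommutative polynomials at a tuple of
`n × n` matrices, yielding a `kn × ln` matrix. -/
def polyEval {k l g n : ℕ} (Q : Matrix (Fin k) (Fin l) (FreeAlgebra ℂ (Fin g)))
    (X : Fin g → Matrix (Fin n) (Fin n) ℂ) :
    Matrix (Fin k × Fin n) (Fin l × Fin n) ℂ :=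
  fun a b => (FreeAlgebra.lift ℂ X) (Q a.1 b.1) a.2 b.2

section Aux

variable {g d n : ℕ}

lemma lamK_apply (A : Fin g → Matrix (Fin d) (Fin d) ℂ)
    (X : Fin g → Matrix (Fin n) (Fin n) ℂ) (p q : Fin d × Fin n) :
    lamK A X p q = ∑ j, A j p.1 q.1 * X j p.2 q.2 := by
  simp [lamK, Matrix.sum_apply]

lemma lamK_zero (A : Fin g → Matrix (Fin d) (Fin d) ℂ) :
    lamK A (0 : Fin g → Matrix (Fin n) (Fin n) ℂ) = 0 := by
  ext p q; simp [lamK_apply]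

lemma lamK_add (A : Fin g → Matrix (Fin d) (Fin d) ℂ)
    (X Y : Fin g → Matrix (Fin n) (Fin n) ℂ) :
    lamK A (X + Y) = lamK A X + lamK A Y := by
  ext p q; simp [lamK_apply, mul_add, Finset.sum_add_distrib]

lemma lamK_sub (A : Fin g → Matrix (Fin d) (Fin d) ℂ)
    (X Y : Fin g → Matrix (Fin n) (Fin n) ℂ) :
    lamK A (X - Y) = lamK A X - lamK A Y := by
  ext p q; simp [lamK_apply, mul_sub, Finset.sum_sub_distrib]

lemma lamK_eq_zero {J : Fin g → Matrix (Fin d) (Fin d) ℂ} (hli : LinearIndependent ℂ J)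
    {X : Fin g → Matrix (Fin n) (Fin n) ℂ} (h : lamK J X = 0) : X = 0 := by
  funext j a b
  have key : ∑ j, X j a b • J j = 0 := by
    ext p q
    have h2 := congrFun (congrFun h (p, a)) (q, b)
    rw [lamK_apply] at h2
    simpa [Matrix.sum_apply, mul_comm] using h2
  have := Fintype.linearIndependent_iff.mp hli (fun j => X j a b) key j
  simpa using this

lemma lamK_inj {J : Fin g → Matrix (Fin d) (Fin d) ℂ} (hli : LinearIndependent ℂ J)
    {X Y : Fin g → Matrix (Fin n) (Fin n) ℂ} (h : lamK J X = lamK J Y) : X = Y := by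
  have := lamK_eq_zero hli (X := X - Y) (by rw [lamK_sub, h, sub_self])
  rwa [sub_eq_zero] at this

lemma blk_lamK (Ξ : Fin g → Matrix (Fin g) (Fin g) ℂ) (X : Fin g → Matrix (Fin n) (Fin n) ℂ)
    (j i : Fin g) : blk (lamK Ξ X) j i = ∑ m, (Ξ m) j i • X m := by
  ext a b; simp [blk, lamK_apply, Matrix.sum_apply]

lemma blk_mul (M N : Matrix (Fin g × Fin n) (Fin g × Fin n) ℂ) (j i : Fin g) :
    blk (M * N) j i = ∑ s, blk M j s * blk N s i := by
  ext a b
  simp [blk, Matrix.mul_apply, Matrix.sum_apply, Fintype.sum_prod_type]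

lemma blk_add (M N : Matrix (Fin g × Fin n) (Fin g × Fin n) ℂ) (j i : Fin g) :
    blk (M + N) j i = blk M j i + blk N j i := rfl

lemma blk_sub (M N : Matrix (Fin g × Fin n) (Fin g × Fin n) ℂ) (j i : Fin g) :
    blk (M - N) j i = blk M j i - blk N j i := rfl

lemma blk_one (j i : Fin g) :
    blk (1 : Matrix (Fin g × Fin n) (Fin g × Fin n) ℂ) j i = if j = i then 1 else 0 := by
  ext a b
  by_cases h : j = i <;> simp [blk, Matrix.one_apply, Prod.ext_iff, h]

/-- `xmul X M = X ⊛ M`, the row-block action: `(X ⊛ M)_i = Σ_j X_j M_{j,i}`. -/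
def xmul {g n : ℕ} (X : Fin g → Matrix (Fin n) (Fin n) ℂ)
    (M : Matrix (Fin g × Fin n) (Fin g × Fin n) ℂ) : Fin g → Matrix (Fin n) (Fin n) ℂ :=
  fun i => ∑ j, X j * blk M j i

lemma pmap_eq_xmul (Ξ : Fin g → Matrix (Fin g) (Fin g) ℂ)
    (X : Fin g → Matrix (Fin n) (Fin n) ℂ) :
    pmap Ξ X = xmul X ((1 - lamK Ξ X)⁻¹) := rfl

lemma qmap_eq_xmul (Ξ : Fin g → Matrix (Fin g) (Fin g) ℂ)
    (X : Fin g → Matrix (Fin n) (Fin n) ℂ) :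
    qmap Ξ X = xmul X ((1 + lamK Ξ X)⁻¹) := rfl

lemma xmul_one (X : Fin g → Matrix (Fin n) (Fin n) ℂ) : xmul X 1 = X := by
  funext i
  simp [xmul, blk_one]

lemma xmul_mul (X : Fin g → Matrix (Fin n) (Fin n) ℂ)
    (M N : Matrix (Fin g × Fin n) (Fin g × Fin n) ℂ) :
    xmul X (M * N) = xmul (xmul X M) N := by
  funext i
  simp only [xmul, blk_mul, Finset.mul_sum, Finset.sum_mul, ← mul_assoc]
  exact Finset.sum_comm

lemma xmul_add (X : Fin g → Matrix (Fin n) (Fin n) ℂ)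
    (M N : Matrix (Fin g × Fin n) (Fin g × Fin n) ℂ) :
    xmul X (M + N) = xmul X M + xmul X N := by
  funext i
  simp [xmul, blk_add, mul_add, Finset.sum_add_distrib]

lemma xmul_sub (X : Fin g → Matrix (Fin n) (Fin n) ℂ)
    (M N : Matrix (Fin g × Fin n) (Fin g × Fin n) ℂ) :
    xmul X (M - N) = xmul X M - xmul X N := by
  funext i
  simp [xmul, blk_sub, mul_sub, Finset.sum_sub_distrib]

lemma sum_kron {ι : Type*} (s : Finset ι) (A : ι → Matrix (Fin d) (Fin d) ℂ)
    (B : Matrix (Fin n) (Fin n) ℂ) :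
    (∑ i ∈ s, A i) ⊗ₖ B = ∑ i ∈ s, (A i) ⊗ₖ B := by
  ext p q; simp [Matrix.sum_apply, Finset.sum_mul]

lemma kron_sum {ι : Type*} (s : Finset ι) (A : Matrix (Fin d) (Fin d) ℂ)
    (B : ι → Matrix (Fin n) (Fin n) ℂ) :
    A ⊗ₖ (∑ i ∈ s, B i) = ∑ i ∈ s, A ⊗ₖ (B i) := by
  ext p q; simp [Matrix.sum_apply, Finset.mul_sum]

lemma lamK_xmul_lamK {J : Fin g → Matrix (Fin d) (Fin d) ℂ}
    {Ξ : Fin g → Matrix (Fin g) (Fin g) ℂ}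
    (hΞ : ∀ k j, J k * J j = ∑ s, (Ξ j) k s • J s)
    (X Y : Fin g → Matrix (Fin n) (Fin n) ℂ) :
    lamK J (xmul X (lamK Ξ Y)) = lamK J X * lamK J Y := by
  have rhs : lamK J X * lamK J Y
      = ∑ k, ∑ m, ∑ s, (Ξ m) k s • ((J s) ⊗ₖ (X k * Y m)) := by
    rw [lamK, lamK, Finset.sum_mul_sum]
    refine Finset.sum_congr rfl fun k _ => Finset.sum_congr rfl fun m _ => ?_
    rw [← Matrix.mul_kronecker_mul, hΞ k m, sum_kron]
    exact Finset.sum_congr rfl fun s _ => Matrix.smul_kronecker _ _ _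
  have lhs : lamK J (xmul X (lamK Ξ Y))
      = ∑ s, ∑ k, ∑ m, (Ξ m) k s • ((J s) ⊗ₖ (X k * Y m)) := by
    rw [lamK]
    refine Finset.sum_congr rfl fun s _ => ?_
    have hx : xmul X (lamK Ξ Y) s = ∑ k, ∑ m, (Ξ m) k s • (X k * Y m) := by
      simp only [xmul, blk_lamK, Finset.mul_sum, mul_smul_comm]
    rw [hx, kron_sum]
    refine Finset.sum_congr rfl fun k _ => ?_
    rw [kron_sum]
    exact Finset.sum_congr rfl fun m _ => Matrix.kronecker_smul _ _ _
  rw [lhs, rhs, Finset.sum_comm]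
  exact Finset.sum_congr rfl fun k _ => Finset.sum_comm

end Aux
section Aux2

variable {g d n : ℕ}

lemma comp_plus {J : Fin g → Matrix (Fin d) (Fin d) ℂ}
    {Ξ : Fin g → Matrix (Fin g) (Fin g) ℂ}
    (hΞ : ∀ k j, J k * J j = ∑ s, (Ξ j) k s • J s)
    (X W : Fin g → Matrix (Fin n) (Fin n) ℂ) :
    lamK J (xmul W (1 + lamK Ξ X)) = lamK J W * (1 + lamK J X) := by
  rw [xmul_add, xmul_one, lamK_add, lamK_xmul_lamK hΞ, mul_add, mul_one]

lemma comp_minus {J : Fin g → Matrix (Fin d) (Fin d) ℂ}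
    {Ξ : Fin g → Matrix (Fin g) (Fin g) ℂ}
    (hΞ : ∀ k j, J k * J j = ∑ s, (Ξ j) k s • J s)
    (X W : Fin g → Matrix (Fin n) (Fin n) ℂ) :
    lamK J (xmul W (1 - lamK Ξ X)) = lamK J W * (1 - lamK J X) := by
  rw [xmul_sub, xmul_one, lamK_sub, lamK_xmul_lamK hΞ, mul_sub, mul_one]

lemma unit_transfer {J : Fin g → Matrix (Fin d) (Fin d) ℂ} (hli : LinearIndependent ℂ J)
    {M : Matrix (Fin g × Fin n) (Fin g × Fin n) ℂ}
    {N : Matrix (Fin d × Fin n) (Fin d × Fin n) ℂ}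
    (hcomp : ∀ W : Fin g → Matrix (Fin n) (Fin n) ℂ, lamK J (xmul W M) = lamK J W * N)
    (hN : IsUnit N) : IsUnit M := by
  rcases isEmpty_or_nonempty (Fin g × Fin n) with h | h
  · exact (Subsingleton.elim (1 : Matrix (Fin g × Fin n) (Fin g × Fin n) ℂ) M) ▸ isUnit_one
  · rw [← Matrix.vecMul_injective_iff_isUnit]
    have ker : ∀ w : Fin g × Fin n → ℂ, w ᵥ* M = 0 → w = 0 := by
      intro w hw
      set X : Fin g → Matrix (Fin n) (Fin n) ℂ := fun j => Matrix.of fun _ b => w (j, b)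
        with hX
      have h1 : xmul X M = 0 := by
        funext i; ext a b
        have e : (xmul X M) i a b = ∑ p : Fin g × Fin n, w p * M p (i, b) := by
          simp [xmul, Matrix.mul_apply, blk, Matrix.sum_apply, Fintype.sum_prod_type, hX]
        rw [e]
        have := congrFun hw (i, b)
        simpa [Matrix.vecMul, dotProduct] using this
      have h2 : lamK J X * N = 0 := by rw [← hcomp, h1, lamK_zero]
      have h3 : lamK J X = 0 := by
        have h4 := congrArg (· * N⁻¹) h2
        simpa [Matrix.mul_assoc,
          Matrix.mul_nonsing_inv _ ((Matrix.isUnit_iff_isUnit_det N).mp hN)] using h4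
      have h4 := lamK_eq_zero hli h3
      funext p
      obtain ⟨j0, a0⟩ := h.some
      have := congrFun (congrFun (congrFun h4 p.1) a0) p.2
      simpa [hX] using this
    intro w1 w2 hw
    have hw' : w1 ᵥ* M = w2 ᵥ* M := hw
    have := ker (w1 - w2) (by rw [Matrix.sub_vecMul, hw', sub_self])
    exact sub_eq_zero.mp this

lemma posdef_unit {ι : Type*} [Fintype ι] [DecidableEq ι] {Λ : Matrix ι ι ℂ}
    (h : (1 + Λ + Λᴴ).PosDef) : IsUnit (1 + Λ) := by
  rw [← Matrix.mulVec_injective_iff_isUnit]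
  have ker : ∀ v : ι → ℂ, (1 + Λ) *ᵥ v = 0 → v = 0 := by
    intro v hv
    by_contra hv0
    have hΛv : Λ *ᵥ v = -v := by
      have h' : v + Λ *ᵥ v = 0 := by
        simpa [Matrix.add_mulVec, Matrix.one_mulVec] using hv
      exact eq_neg_of_add_eq_zero_right h'
    have hpos := h.dotProduct_mulVec_pos hv0
    have hLv : (1 + Λ + Λᴴ) *ᵥ v = Λᴴ *ᵥ v := by
      rw [Matrix.add_mulVec, Matrix.add_mulVec, Matrix.one_mulVec, hΛv]
      simp
    rw [hLv] at hpos
    have hdot : dotProduct (star v) (Λᴴ *ᵥ v) = -(dotProduct (star v) v) := by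
      rw [Matrix.dotProduct_mulVec, ← Matrix.star_mulVec, hΛv]
      simp [dotProduct, Finset.sum_neg_distrib]
    rw [hdot] at hpos
    have hp2 : 0 < dotProduct (star v) v :=
      Matrix.dotProduct_star_self_pos_iff.mpr hv0
    have := add_pos hpos hp2
    simp at this
  intro v1 v2 hv
  have hv' : (1 + Λ) *ᵥ v1 = (1 + Λ) *ᵥ v2 := hv
  have := ker (v1 - v2) (by rw [Matrix.mulVec_sub, hv', sub_self])
  exact sub_eq_zero.mp this

lemma inv_isUnit {ι : Type*} [Fintype ι] [DecidableEq ι] {A : Matrix ι ι ℂ}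
    (h : IsUnit A) : IsUnit A⁻¹ :=
  Matrix.isUnit_nonsing_inv_iff.mpr h

lemma one_sub_mul_inv {ι : Type*} [Fintype ι] [DecidableEq ι] {Λ : Matrix ι ι ℂ}
    (hS : IsUnit (1 + Λ)) : 1 - Λ * (1 + Λ)⁻¹ = (1 + Λ)⁻¹ := by
  have hd := (Matrix.isUnit_iff_isUnit_det _).mp hS
  have h1 : (1 - Λ * (1 + Λ)⁻¹) * (1 + Λ) = 1 := by
    rw [sub_mul, one_mul, Matrix.mul_assoc, Matrix.nonsing_inv_mul _ hd, mul_one]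
    abel
  exact (Matrix.inv_eq_left_inv h1).symm

lemma one_add_mul_inv {ι : Type*} [Fintype ι] [DecidableEq ι] {Λ : Matrix ι ι ℂ}
    (hT : IsUnit (1 - Λ)) : 1 + Λ * (1 - Λ)⁻¹ = (1 - Λ)⁻¹ := by
  have hd := (Matrix.isUnit_iff_isUnit_det _).mp hT
  have h1 : (1 + Λ * (1 - Λ)⁻¹) * (1 - Λ) = 1 := by
    rw [add_mul, one_mul, Matrix.mul_assoc, Matrix.nonsing_inv_mul _ hd, mul_one]
    abel
  exact (Matrix.inv_eq_left_inv h1).symm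

lemma lam_xmul_inv {J : Fin g → Matrix (Fin d) (Fin d) ℂ}
    {M : Matrix (Fin g × Fin n) (Fin g × Fin n) ℂ}
    {N : Matrix (Fin d × Fin n) (Fin d × Fin n) ℂ}
    (hcomp : ∀ W : Fin g → Matrix (Fin n) (Fin n) ℂ, lamK J (xmul W M) = lamK J W * N)
    (hM : IsUnit M) (hN : IsUnit N) (X : Fin g → Matrix (Fin n) (Fin n) ℂ) :
    lamK J (xmul X M⁻¹) = lamK J X * N⁻¹ := by
  have h1 : xmul (xmul X M⁻¹) M = X := by
    rw [← xmul_mul, Matrix.nonsing_inv_mul _ ((Matrix.isUnit_iff_isUnit_det M).mp hM),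
      xmul_one]
  have h2 : lamK J (xmul X M⁻¹) * N = lamK J X := by rw [← hcomp, h1]
  calc lamK J (xmul X M⁻¹)
      = lamK J (xmul X M⁻¹) * (N * N⁻¹) := by
        rw [Matrix.mul_nonsing_inv _ ((Matrix.isUnit_iff_isUnit_det N).mp hN), mul_one]
    _ = (lamK J (xmul X M⁻¹) * N) * N⁻¹ := by rw [Matrix.mul_assoc]
    _ = lamK J X * N⁻¹ := by rw [h2]

lemma posdef_conj {ι : Type*} [Fintype ι] [DecidableEq ι] {A S : Matrix ι ι ℂ}
    (hA : A.PosDef) (hS : IsUnit S) : (Sᴴ * A * S).PosDef := by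
  refine Matrix.PosDef.of_dotProduct_mulVec_pos ?_ ?_
  · have h1 : Aᴴ = A := hA.isHermitian
    show (Sᴴ * A * S)ᴴ = Sᴴ * A * S
    rw [Matrix.conjTranspose_mul, Matrix.conjTranspose_mul, Matrix.conjTranspose_conjTranspose,
      h1, Matrix.mul_assoc]
  · intro x hx
    have hx' : S *ᵥ x ≠ 0 := by
      intro hc
      exact hx (Matrix.mulVec_injective_iff_isUnit.mpr hS (by simpa using hc))
    have hp := hA.dotProduct_mulVec_pos hx'
    have e : dotProduct (star x) ((Sᴴ * A * S) *ᵥ x)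
        = dotProduct (star (S *ᵥ x)) (A *ᵥ (S *ᵥ x)) := by
      rw [← Matrix.mulVec_mulVec, ← Matrix.mulVec_mulVec, Matrix.dotProduct_mulVec,
        ← Matrix.star_mulVec]
    rw [e]
    exact hp

lemma one_sub_conj {ι : Type*} [Fintype ι] [DecidableEq ι] {Λ : Matrix ι ι ℂ}
    (hS : IsUnit (1 + Λ)) :
    1 - (Λ * (1 + Λ)⁻¹)ᴴ * (Λ * (1 + Λ)⁻¹)
      = ((1 + Λ)⁻¹)ᴴ * (1 + Λ + Λᴴ) * (1 + Λ)⁻¹ := by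
  set K := (1 + Λ)⁻¹ with hK
  have hd := (Matrix.isUnit_iff_isUnit_det _).mp hS
  have h1 : (1 + Λ) * K = 1 := Matrix.mul_nonsing_inv _ hd
  have h1' : Kᴴ * (1 + Λ)ᴴ = 1 := by
    rw [← Matrix.conjTranspose_mul, h1, Matrix.conjTranspose_one]
  have key : Kᴴ * ((1 + Λ)ᴴ * (1 + Λ)) * K = 1 := by
    calc Kᴴ * ((1 + Λ)ᴴ * (1 + Λ)) * K = (Kᴴ * (1 + Λ)ᴴ) * ((1 + Λ) * K) := by
          noncomm_ring
      _ = 1 := by rw [h1, h1', one_mul]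
  have expand : (1 + Λ + Λᴴ : Matrix ι ι ℂ) = (1 + Λ)ᴴ * (1 + Λ) - Λᴴ * Λ := by
    simp only [Matrix.conjTranspose_add, Matrix.conjTranspose_one]
    noncomm_ring
  rw [expand]
  have e2 : Kᴴ * ((1 + Λ)ᴴ * (1 + Λ) - Λᴴ * Λ) * K
      = Kᴴ * ((1 + Λ)ᴴ * (1 + Λ)) * K - (Λ * K)ᴴ * (Λ * K) := by
    simp only [Matrix.conjTranspose_mul]
    noncomm_ring
  rw [e2, key]

lemma lpen_conj {ι : Type*} [Fintype ι] [DecidableEq ι] {Λ : Matrix ι ι ℂ}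
    (hT : IsUnit (1 - Λ)) :
    1 + Λ * (1 - Λ)⁻¹ + (Λ * (1 - Λ)⁻¹)ᴴ
      = ((1 - Λ)⁻¹)ᴴ * (1 - Λᴴ * Λ) * (1 - Λ)⁻¹ := by
  set K := (1 - Λ)⁻¹ with hK
  have hd := (Matrix.isUnit_iff_isUnit_det _).mp hT
  have h1 : (1 - Λ) * K = 1 := Matrix.mul_nonsing_inv _ hd
  have h1' : Kᴴ * (1 - Λ)ᴴ = 1 := by
    rw [← Matrix.conjTranspose_mul, h1, Matrix.conjTranspose_one]
  have expand : (1 - Λᴴ * Λ : Matrix ι ι ℂ)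
      = (1 - Λ)ᴴ * (1 - Λ) + (1 - Λ)ᴴ * Λ + Λᴴ * (1 - Λ) := by
    simp only [Matrix.conjTranspose_sub, Matrix.conjTranspose_one]
    noncomm_ring
  rw [expand]
  have e1 : Kᴴ * ((1 - Λ)ᴴ * (1 - Λ)) * K = 1 := by
    calc Kᴴ * ((1 - Λ)ᴴ * (1 - Λ)) * K = (Kᴴ * (1 - Λ)ᴴ) * ((1 - Λ) * K) := by noncomm_ring
      _ = 1 := by rw [h1, h1', one_mul]
  have e2 : Kᴴ * ((1 - Λ)ᴴ * Λ) * K = Λ * K := by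
    calc Kᴴ * ((1 - Λ)ᴴ * Λ) * K = (Kᴴ * (1 - Λ)ᴴ) * (Λ * K) := by noncomm_ring
      _ = Λ * K := by rw [h1', one_mul]
  have e3 : Kᴴ * (Λᴴ * (1 - Λ)) * K = (Λ * K)ᴴ := by
    calc Kᴴ * (Λᴴ * (1 - Λ)) * K = (Kᴴ * Λᴴ) * ((1 - Λ) * K) := by noncomm_ring
      _ = (Λ * K)ᴴ := by rw [h1, mul_one, ← Matrix.conjTranspose_mul]
  have e4 : Kᴴ * ((1 - Λ)ᴴ * (1 - Λ) + (1 - Λ)ᴴ * Λ + Λᴴ * (1 - Λ)) * K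
      = Kᴴ * ((1 - Λ)ᴴ * (1 - Λ)) * K + Kᴴ * ((1 - Λ)ᴴ * Λ) * K
        + Kᴴ * (Λᴴ * (1 - Λ)) * K := by noncomm_ring
  rw [e4, e1, e2, e3]

end Aux2
section Aux3

variable {ι : Type*} [Fintype ι] [DecidableEq ι]

lemma dot_star_self_eq (v : ι → ℂ) :
    dotProduct (star v) v
      = ((‖(WithLp.equiv 2 (ι → ℂ)).symm v‖ ^ 2 : ℝ) : ℂ) := by
  rw [EuclideanSpace.norm_eq, Real.sq_sqrt (by positivity)]
  push_cast
  simp only [dotProduct, Pi.star_apply]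
  refine Finset.sum_congr rfl fun i _ => ?_
  simpa using RCLike.conj_mul (v i)

lemma euclid_apply (M : Matrix ι ι ℂ) (v : ι → ℂ) :
    Matrix.toEuclideanCLM (𝕜 := ℂ) M ((WithLp.equiv 2 (ι → ℂ)).symm v)
      = (WithLp.equiv 2 (ι → ℂ)).symm (M *ᵥ v) := by
  exact Matrix.toEuclideanCLM_toLp M v

lemma dot_sub_quad (M : Matrix ι ι ℂ) (v : ι → ℂ) :
    dotProduct (star v) ((1 - Mᴴ * M) *ᵥ v)
      = ((‖(WithLp.equiv 2 (ι → ℂ)).symm v‖ ^ 2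
          - ‖(WithLp.equiv 2 (ι → ℂ)).symm (M *ᵥ v)‖ ^ 2 : ℝ) : ℂ) := by
  rw [Matrix.sub_mulVec, dotProduct_sub, Matrix.one_mulVec, dot_star_self_eq]
  have e : dotProduct (star v) ((Mᴴ * M) *ᵥ v)
      = dotProduct (star (M *ᵥ v)) (M *ᵥ v) := by
    rw [← Matrix.mulVec_mulVec, Matrix.dotProduct_mulVec, ← Matrix.star_mulVec]
  rw [e, dot_star_self_eq]
  push_cast
  ring

lemma posdef_of_norm_lt_one {M : Matrix ι ι ℂ} (h : ‖M‖ < 1) : (1 - Mᴴ * M).PosDef := by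
  refine Matrix.PosDef.of_dotProduct_mulVec_pos ?_ ?_
  · show (1 - Mᴴ * M)ᴴ = 1 - Mᴴ * M
    simp [Matrix.conjTranspose_sub, Matrix.conjTranspose_mul]
  · intro v hv
    rw [dot_sub_quad, Complex.zero_lt_real]
    set ξ := (WithLp.equiv 2 (ι → ℂ)).symm v with hξdef
    have hξ : ξ ≠ 0 := by
      simpa [hξdef] using hv
    have hξpos : 0 < ‖ξ‖ := norm_pos_iff.mpr hξ
    have h1 : ‖(WithLp.equiv 2 (ι → ℂ)).symm (M *ᵥ v)‖ ≤ ‖M‖ * ‖ξ‖ := by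
      rw [← euclid_apply]
      calc ‖Matrix.toEuclideanCLM (𝕜 := ℂ) M ξ‖
          ≤ ‖Matrix.toEuclideanCLM (𝕜 := ℂ) M‖ * ‖ξ‖ :=
            (Matrix.toEuclideanCLM (𝕜 := ℂ) M).le_opNorm ξ
        _ = ‖M‖ * ‖ξ‖ := by rw [← Matrix.cstar_norm_def]
    have hMn : 0 ≤ ‖M‖ := norm_nonneg M
    nlinarith [mul_self_le_mul_self (norm_nonneg ((WithLp.equiv 2 (ι → ℂ)).symm (M *ᵥ v))) h1,
      mul_self_lt_mul_self hMn h, mul_pos hξpos hξpos,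
      norm_nonneg ((WithLp.equiv 2 (ι → ℂ)).symm (M *ᵥ v))]

lemma norm_lt_one_of_posdef {M : Matrix ι ι ℂ} (h : (1 - Mᴴ * M).PosDef) : ‖M‖ < 1 := by
  rcases isEmpty_or_nonempty ι with hι | hι
  · have hM0 : M = 0 := Subsingleton.elim _ _
    rw [hM0, norm_zero]
    norm_num
  · set T := Matrix.toEuclideanCLM (𝕜 := ℂ) M with hT
    have hsne : (Metric.sphere (0 : EuclideanSpace ℂ ι) 1).Nonempty := by
      refine ⟨EuclideanSpace.single hι.some 1, ?_⟩
      simp [mem_sphere_zero_iff_norm]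
    obtain ⟨ξ₀, hξ₀s, hmax⟩ := (isCompact_sphere (0 : EuclideanSpace ℂ ι) 1).exists_isMaxOn
      hsne ((T.continuous.norm).continuousOn)
    have hξ₀n : ‖ξ₀‖ = 1 := mem_sphere_zero_iff_norm.mp hξ₀s
    have hbound : ∀ ξ : EuclideanSpace ℂ ι, ‖T ξ‖ ≤ ‖T ξ₀‖ * ‖ξ‖ := by
      intro ξ
      rcases eq_or_ne ξ 0 with rfl | hz
      · simp
      · have hξpos : 0 < ‖ξ‖ := norm_pos_iff.mpr hz
        set u : EuclideanSpace ℂ ι := (‖ξ‖⁻¹ : ℂ) • ξ with hu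
        have hun : ‖u‖ = 1 := by
          rw [hu, norm_smul]
          simp [norm_inv, abs_of_pos hξpos, inv_mul_cancel₀ hξpos.ne']
        have hmem : u ∈ Metric.sphere (0 : EuclideanSpace ℂ ι) 1 :=
          mem_sphere_zero_iff_norm.mpr hun
        have h2 : ‖T u‖ ≤ ‖T ξ₀‖ := hmax hmem
        have hTu : ‖T u‖ = ‖ξ‖⁻¹ * ‖T ξ‖ := by
          rw [hu, map_smul, norm_smul]
          simp [norm_inv, abs_of_pos hξpos]
        rw [hTu] at h2
        calc ‖T ξ‖ = ‖ξ‖ * (‖ξ‖⁻¹ * ‖T ξ‖) := by field_simp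
          _ ≤ ‖ξ‖ * ‖T ξ₀‖ := by
              exact mul_le_mul_of_nonneg_left h2 hξpos.le
          _ = ‖T ξ₀‖ * ‖ξ‖ := mul_comm _ _
    have hMle : ‖M‖ ≤ ‖T ξ₀‖ := by
      rw [Matrix.cstar_norm_def]
      exact ContinuousLinearMap.opNorm_le_bound _ (norm_nonneg _) hbound
    have hlt : ‖T ξ₀‖ < 1 := by
      set v : ι → ℂ := WithLp.equiv 2 (ι → ℂ) ξ₀ with hv
      have hsymm : (WithLp.equiv 2 (ι → ℂ)).symm v = ξ₀ := Equiv.symm_apply_apply _ _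
      have hξ₀0 : ξ₀ ≠ 0 := by
        intro hc; rw [hc, norm_zero] at hξ₀n; norm_num at hξ₀n
      have hv0 : v ≠ 0 := by
        intro hc
        apply hξ₀0
        rw [← hsymm, hc]
        simp
      have hp := h.dotProduct_mulVec_pos hv0
      rw [dot_sub_quad, Complex.zero_lt_real, hsymm] at hp
      have hTv : (WithLp.equiv 2 (ι → ℂ)).symm (M *ᵥ v) = T ξ₀ := by
        rw [← euclid_apply, hsymm]
      rw [hTv, hξ₀n] at hp
      nlinarith [norm_nonneg (T ξ₀)]
    exact lt_of_le_of_lt hMle hlt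

lemma unit_one_sub_of_norm_lt_one {M : Matrix ι ι ℂ} (h : ‖M‖ < 1) : IsUnit (1 - M) := by
  rw [← Matrix.mulVec_injective_iff_isUnit]
  have ker : ∀ v : ι → ℂ, (1 - M) *ᵥ v = 0 → v = 0 := by
    intro v hv
    by_contra hv0
    have hM : M *ᵥ v = v := by
      rw [Matrix.sub_mulVec, Matrix.one_mulVec] at hv
      exact (sub_eq_zero.mp hv).symm
    have hpos : 0 < ‖(WithLp.equiv 2 (ι → ℂ)).symm v‖ :=
      norm_pos_iff.mpr (by simpa using hv0)
    have h1 : ‖(WithLp.equiv 2 (ι → ℂ)).symm (M *ᵥ v)‖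
        ≤ ‖M‖ * ‖(WithLp.equiv 2 (ι → ℂ)).symm v‖ := by
      rw [← euclid_apply]
      calc ‖Matrix.toEuclideanCLM (𝕜 := ℂ) M ((WithLp.equiv 2 (ι → ℂ)).symm v)‖
          ≤ ‖Matrix.toEuclideanCLM (𝕜 := ℂ) M‖ * ‖(WithLp.equiv 2 (ι → ℂ)).symm v‖ :=
            (Matrix.toEuclideanCLM (𝕜 := ℂ) M).le_opNorm _
        _ = ‖M‖ * ‖(WithLp.equiv 2 (ι → ℂ)).symm v‖ := by rw [← Matrix.cstar_norm_def]
    rw [hM] at h1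
    nlinarith
  intro v1 v2 hv
  have hv' : (1 - M) *ᵥ v1 = (1 - M) *ᵥ v2 := hv
  have := ker (v1 - v2) (by rw [Matrix.mulVec_sub, hv', sub_self])
  exact sub_eq_zero.mp this

end Aux3
/-- `q(X) = X(I+Λ_Ξ(X))⁻¹` is a bijection from the interior of the
free spectrahedron `D_J(n)` onto the interior of the spectraball `B_J(n)`, with
inverse `p(X) = X(I-Λ_Ξ(X))⁻¹`. -/
theorem qmap_bianalytic_interior {g d : ℕ}
    (J : Fin g → Matrix (Fin d) (Fin d) ℂ)
    (Ξ : Fin g → Matrix (Fin g) (Fin g) ℂ)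
    (hli : LinearIndependent ℂ J)
    (hmul : ∀ k j, J k * J j ∈ Submodule.span ℂ (Set.range J))
    (hΞ : ∀ k j, J k * J j = ∑ s, (Ξ j) k s • J s)
    (n : ℕ) :
    (∀ Y : Fin g → Matrix (Fin n) (Fin n) ℂ, (Lpen J Y).PosDef →
      IsUnit (1 + lamK Ξ Y) ∧ ‖lamK J (qmap Ξ Y)‖ < 1 ∧
      IsUnit (1 - lamK Ξ (qmap Ξ Y)) ∧ pmap Ξ (qmap Ξ Y) = Y) ∧
    (∀ X : Fin g → Matrix (Fin n) (Fin n) ℂ, ‖lamK J X‖ < 1 →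
      IsUnit (1 - lamK Ξ X) ∧ (Lpen J (pmap Ξ X)).PosDef ∧
      IsUnit (1 + lamK Ξ (pmap Ξ X)) ∧ qmap Ξ (pmap Ξ X) = X) ∧
    Set.BijOn (qmap Ξ) {Y : Fin g → Matrix (Fin n) (Fin n) ℂ | (Lpen J Y).PosDef}
      {X : Fin g → Matrix (Fin n) (Fin n) ℂ | ‖lamK J X‖ < 1} := by
  have partI : ∀ Y : Fin g → Matrix (Fin n) (Fin n) ℂ, (Lpen J Y).PosDef →
      IsUnit (1 + lamK Ξ Y) ∧ ‖lamK J (qmap Ξ Y)‖ < 1 ∧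
      IsUnit (1 - lamK Ξ (qmap Ξ Y)) ∧ pmap Ξ (qmap Ξ Y) = Y := by
    intro Y hY
    have hY' : (1 + lamK J Y + (lamK J Y)ᴴ).PosDef := hY
    have hS : IsUnit (1 + lamK J Y) := posdef_unit hY'
    have hSg : IsUnit (1 + lamK Ξ Y) := unit_transfer hli (comp_plus hΞ Y) hS
    have hq : lamK J (qmap Ξ Y) = lamK J Y * (1 + lamK J Y)⁻¹ := by
      rw [qmap_eq_xmul]
      exact lam_xmul_inv (comp_plus hΞ Y) hSg hS Y
    have hnorm : ‖lamK J (qmap Ξ Y)‖ < 1 := by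
      apply norm_lt_one_of_posdef
      rw [hq, one_sub_conj hS]
      exact posdef_conj hY' (inv_isUnit hS)
    have hNq : (1 : Matrix (Fin d × Fin n) (Fin d × Fin n) ℂ) - lamK J (qmap Ξ Y)
        = (1 + lamK J Y)⁻¹ := by
      rw [hq]; exact one_sub_mul_inv hS
    have hTq : IsUnit (1 - lamK J (qmap Ξ Y)) := by rw [hNq]; exact inv_isUnit hS
    have hTg : IsUnit (1 - lamK Ξ (qmap Ξ Y)) :=
      unit_transfer hli (comp_minus hΞ (qmap Ξ Y)) hTq
    have hp : lamK J (pmap Ξ (qmap Ξ Y)) = lamK J Y := by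
      rw [pmap_eq_xmul,
        lam_xmul_inv (comp_minus hΞ (qmap Ξ Y)) hTg hTq (qmap Ξ Y), hNq, hq,
        Matrix.nonsing_inv_nonsing_inv _ ((Matrix.isUnit_iff_isUnit_det _).mp hS),
        Matrix.mul_assoc, Matrix.nonsing_inv_mul _ ((Matrix.isUnit_iff_isUnit_det _).mp hS),
        mul_one]
    exact ⟨hSg, hnorm, hTg, lamK_inj hli hp⟩
  have partII : ∀ X : Fin g → Matrix (Fin n) (Fin n) ℂ, ‖lamK J X‖ < 1 →
      IsUnit (1 - lamK Ξ X) ∧ (Lpen J (pmap Ξ X)).PosDef ∧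
      IsUnit (1 + lamK Ξ (pmap Ξ X)) ∧ qmap Ξ (pmap Ξ X) = X := by
    intro X hX
    have hT : IsUnit (1 - lamK J X) := unit_one_sub_of_norm_lt_one hX
    have hTg : IsUnit (1 - lamK Ξ X) := unit_transfer hli (comp_minus hΞ X) hT
    have hp : lamK J (pmap Ξ X) = lamK J X * (1 - lamK J X)⁻¹ := by
      rw [pmap_eq_xmul]; exact lam_xmul_inv (comp_minus hΞ X) hTg hT X
    have hpd : (Lpen J (pmap Ξ X)).PosDef := by
      show (1 + lamK J (pmap Ξ X) + (lamK J (pmap Ξ X))ᴴ).PosDef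
      rw [hp, lpen_conj hT]
      exact posdef_conj (posdef_of_norm_lt_one hX) (inv_isUnit hT)
    have hSq : (1 : Matrix (Fin d × Fin n) (Fin d × Fin n) ℂ) + lamK J (pmap Ξ X)
        = (1 - lamK J X)⁻¹ := by
      rw [hp]; exact one_add_mul_inv hT
    have hSu : IsUnit (1 + lamK J (pmap Ξ X)) := by rw [hSq]; exact inv_isUnit hT
    have hSg : IsUnit (1 + lamK Ξ (pmap Ξ X)) :=
      unit_transfer hli (comp_plus hΞ (pmap Ξ X)) hSu
    have hqp : lamK J (qmap Ξ (pmap Ξ X)) = lamK J X := by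
      rw [qmap_eq_xmul, lam_xmul_inv (comp_plus hΞ (pmap Ξ X)) hSg hSu (pmap Ξ X), hSq, hp,
        Matrix.nonsing_inv_nonsing_inv _ ((Matrix.isUnit_iff_isUnit_det _).mp hT),
        Matrix.mul_assoc, Matrix.nonsing_inv_mul _ ((Matrix.isUnit_iff_isUnit_det _).mp hT),
        mul_one]
    exact ⟨hTg, hpd, hSg, lamK_inj hli hqp⟩
  refine ⟨partI, partII, ?_, ?_, ?_⟩
  · intro Y hY
    exact (partI Y hY).2.1
  · intro Y1 h1 Y2 h2 he
    rw [← (partI Y1 h1).2.2.2, ← (partI Y2 h2).2.2.2, he]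
  · intro X hX
    exact ⟨pmap Ξ X, (partII X hX).2.1, (partII X hX).2.2.2⟩
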